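/- For a GKS function f on a finite set with GKS basis, the set {x : f(x) = max_y |f(y)|} is nonempty, i.e., the maximum of |f| is attained at a point where f is positive (equals max|f|). -/
import Mathlib

open Finset
lemma aux_dual {E : Type*} [Fintype E] [DecidableEq E] {n : ℕ} (μ : E → ℝ) (f : Fin (n+1) → E → ℝ)
    (hcard : Fintype.card E = n + 1) (hμpos : ∀ x, 0 < μ x)
    (horth : ∀ i j, ∑ x, μ x * f i x * f j x = if i = j then (1:ℝ) else 0)
    (x y : E) : (∑ i, f i x * f i y) * μ y = if x = y then 1 else 0 := by
  classical
  let e : E ≃ Fin (n+1) := Fintype.equivFinOfCardEq hcard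
  set M : Matrix (Fin (n+1)) (Fin (n+1)) ℝ :=
    Matrix.of (fun i j => Real.sqrt (μ (e.symm j)) * f i (e.symm j)) with hM
  have h1 : M * M.transpose = 1 := by
    ext i j
    simp only [Matrix.mul_apply, Matrix.transpose_apply, hM, Matrix.of_apply, Matrix.one_apply]
    have hterm : ∀ k : Fin (n+1), Real.sqrt (μ (e.symm k)) * f i (e.symm k) *
        (Real.sqrt (μ (e.symm k)) * f j (e.symm k))
        = μ (e.symm k) * f i (e.symm k) * f j (e.symm k) := by
      intro k
      rw [mul_mul_mul_comm, Real.mul_self_sqrt (hμpos _).le]; ring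
    rw [Finset.sum_congr rfl (fun k _ => hterm k)]
    rw [Fintype.sum_equiv e.symm _ (fun z => μ z * f i z * f j z) (fun k => rfl)]
    exact horth i j
  have h2 : M.transpose * M = 1 := mul_eq_one_comm.mp h1
  have h3 := congrFun (congrFun h2 (e x)) (e y)
  simp only [Matrix.mul_apply, Matrix.transpose_apply, hM, Matrix.of_apply, Matrix.one_apply,
    Equiv.symm_apply_apply, EmbeddingLike.apply_eq_iff_eq] at h3
  have h4 : Real.sqrt (μ x) * Real.sqrt (μ y) * (∑ i, f i x * f i y)
      = if x = y then 1 else 0 := by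
    rw [← h3, Finset.mul_sum]
    exact Finset.sum_congr rfl (fun i _ => by ring)
  by_cases hxy : x = y
  · subst hxy
    rw [if_pos rfl] at h4 ⊢
    rw [Real.mul_self_sqrt (hμpos x).le] at h4
    linarith [h4, mul_comm (∑ i, f i x * f i x) (μ x)]
  · rw [if_neg hxy] at h4 ⊢
    have h5 : Real.sqrt (μ x) * Real.sqrt (μ y) ≠ 0 :=
      ne_of_gt (mul_pos (Real.sqrt_pos.mpr (hμpos x)) (Real.sqrt_pos.mpr (hμpos y)))
    have hs : (∑ i, f i x * f i y) = 0 := by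
      rcases mul_eq_zero.mp h4 with h | h
      · exact absurd h h5
      · exact h
    rw [hs, zero_mul]
lemma aux_expand {E : Type*} [Fintype E] [DecidableEq E] {n : ℕ} (μ : E → ℝ) (f : Fin (n+1) → E → ℝ)
    (hcard : Fintype.card E = n + 1) (hμpos : ∀ x, 0 < μ x)
    (horth : ∀ i j, ∑ x, μ x * f i x * f j x = if i = j then (1:ℝ) else 0)
    (h : E → ℝ) (x : E) : h x = ∑ i, (∑ y, μ y * h y * f i y) * f i x := by
  have key := fun y => aux_dual μ f hcard hμpos horth x y
  calc h x = ∑ y, h y * ((∑ i, f i x * f i y) * μ y) := by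
        rw [Finset.sum_congr rfl (fun y _ => by rw [key y])]
        simp [mul_ite]
    _ = ∑ i, (∑ y, μ y * h y * f i y) * f i x := by
        simp_rw [Finset.sum_mul, Finset.mul_sum]
        rw [Finset.sum_comm]
        exact Finset.sum_congr rfl (fun y _ => Finset.sum_congr rfl (fun i _ => by ring))

lemma aux_prod {E : Type*} [Fintype E] [DecidableEq E] {n : ℕ} (μ : E → ℝ) (f : Fin (n+1) → E → ℝ)
    (hcard : Fintype.card E = n + 1) (hμpos : ∀ x, 0 < μ x)
    (horth : ∀ i j, ∑ x, μ x * f i x * f j x = if i = j then (1:ℝ) else 0)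
    (hGKS : ∀ i j k, 0 ≤ ∑ x, μ x * f i x * f j x * f k x)
    (h₁ h₂ : E → ℝ)
    (H1 : ∀ i, 0 ≤ ∑ x, μ x * h₁ x * f i x) (H2 : ∀ i, 0 ≤ ∑ x, μ x * h₂ x * f i x)
    (i : Fin (n+1)) : 0 ≤ ∑ x, μ x * (h₁ x * h₂ x) * f i x := by
  have key : ∑ x, μ x * (h₁ x * h₂ x) * f i x
      = ∑ j, ∑ k, (∑ y, μ y * h₁ y * f j y) * (∑ y, μ y * h₂ y * f k y)
          * (∑ x, μ x * f j x * f k x * f i x) := by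
    have e1 : ∀ x, μ x * (h₁ x * h₂ x) * f i x
        = ∑ j, ∑ k, (∑ y, μ y * h₁ y * f j y) * (∑ y, μ y * h₂ y * f k y)
            * (μ x * f j x * f k x * f i x) := by
      intro x
      conv_lhs => rw [aux_expand μ f hcard hμpos horth h₁ x,
        aux_expand μ f hcard hμpos horth h₂ x]
      rw [Finset.sum_mul_sum]
      rw [Finset.mul_sum, Finset.sum_mul]
      refine Finset.sum_congr rfl (fun j _ => ?_)
      rw [Finset.mul_sum, Finset.sum_mul]
      refine Finset.sum_congr rfl (fun k _ => by ring)
    rw [Finset.sum_congr rfl (fun x _ => e1 x)]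
    rw [Finset.sum_comm]
    refine Finset.sum_congr rfl (fun j _ => ?_)
    rw [Finset.sum_comm]
    refine Finset.sum_congr rfl (fun k _ => ?_)
    exact (Finset.mul_sum _ _ _).symm
  rw [key]
  refine Finset.sum_nonneg (fun j _ => Finset.sum_nonneg (fun k _ => ?_))
  exact mul_nonneg (mul_nonneg (H1 j) (H2 k)) (hGKS j k i)

/-- For a nonzero GKS function `g` on a finite set with a GKS basis, the
maximum `m` of `|g|` is attained at a point where `g` equals `m`: the set
`{x : g x = m}` is nonempty. -/
theorem stmt3 {E : Type*} [Fintype E] [Nonempty E] (n : ℕ)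
    (μ : E → ℝ) (f : Fin (n + 1) → E → ℝ)
    (hcard : Fintype.card E = n + 1)
    (hμpos : ∀ x, 0 < μ x) (hμsum : ∑ x, μ x = 1)
    (hf0 : ∀ x, f 0 x = 1)
    (horth : ∀ i j, ∑ x, μ x * f i x * f j x = if i = j then (1 : ℝ) else 0)
    (hGKS : ∀ i j k, 0 ≤ ∑ x, μ x * f i x * f j x * f k x)
    (g : E → ℝ) (hg : ∀ i, 0 ≤ ∑ x, μ x * g x * f i x)
    (hg0 : ∃ x, g x ≠ 0)
    (m : ℝ) (hm : IsGreatest (Set.range fun x => |g x|) m) :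
    ∃ x, g x = m := by
  classical
  have hpow : ∀ r : ℕ, ∀ i, 0 ≤ ∑ x, μ x * g x ^ r * f i x := by
    intro r
    induction r with
    | zero =>
      intro i
      have he : ∀ x, μ x * g x ^ 0 * f i x = μ x * f 0 x * f i x := by
        intro x; rw [hf0]; ring
      rw [Finset.sum_congr rfl (fun x _ => he x), horth 0 i]
      split <;> norm_num
    | succ r ih =>
      intro i
      have := aux_prod μ f hcard hμpos horth hGKS (fun x => g x ^ r) g ih hg i
      simp only [pow_succ]
      exact this
  have hint : ∀ r : ℕ, 0 ≤ ∑ x, μ x * g x ^ r := by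
    intro r
    have := hpow r 0
    simpa [hf0] using this
  by_contra hc
  push_neg at hc
  obtain ⟨x1, hx1⟩ := hg0
  have hmpos : 0 < m := lt_of_lt_of_le (abs_pos.mpr hx1) (hm.2 ⟨x1, rfl⟩)
  obtain ⟨x0, hx0⟩ := hm.1
  have hgx0 : g x0 = -m := by
    rcases (abs_eq (le_of_lt hmpos)).mp hx0 with h | h
    · exact absurd h (hc x0)
    · exact h
  set a : ℕ → ℝ := fun k => ∑ x, μ x * (g x / m) ^ (2*k+1) with ha
  have hak : ∀ k, 0 ≤ a k := by
    intro k
    have h1 := hint (2*k+1)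
    have h2 : a k = (∑ x, μ x * g x ^ (2*k+1)) / m ^ (2*k+1) := by
      rw [ha, Finset.sum_div]
      exact Finset.sum_congr rfl fun x _ => by rw [div_pow]; ring
    rw [h2]
    positivity
  have hlim : Filter.Tendsto a Filter.atTop
      (nhds (∑ x, if g x = -m then -μ x else 0)) := by
    apply tendsto_finset_sum
    intro x _
    by_cases hx : g x = -m
    · rw [if_pos hx]
      have hconst : (fun k : ℕ => μ x * (g x / m) ^ (2*k+1)) = fun _ => -μ x := by
        funext k
        rw [hx, neg_div, div_self (ne_of_gt hmpos), Odd.neg_one_pow ⟨k, by ring⟩]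
        ring
      rw [hconst]
      exact tendsto_const_nhds
    · rw [if_neg hx]
      have habs : |g x / m| < 1 := by
        rw [abs_div, abs_of_pos hmpos, div_lt_one hmpos]
        rcases lt_or_eq_of_le (hm.2 ⟨x, rfl⟩ : |g x| ≤ m) with h | h
        · exact h
        · rcases (abs_eq hmpos.le).mp h with h' | h'
          · exact absurd h' (hc x)
          · exact absurd h' hx
      have h0 : Filter.Tendsto (fun k : ℕ => (g x / m) ^ (2*k+1))
          Filter.atTop (nhds 0) := by
        have hp := tendsto_pow_atTop_nhds_zero_of_abs_lt_one habs
        exact hp.comp (Filter.tendsto_atTop_mono (fun k => by simp only [id_eq]; omega) Filter.tendsto_id)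
      have := h0.const_mul (μ x)
      simpa using this
  have hneg : (∑ x, if g x = -m then -μ x else 0) < 0 := by
    have hle : ∀ x : E, (if g x = -m then -μ x else 0) ≤ 0 := by
      intro x
      split
      · linarith [hμpos x]
      · exact le_refl 0
    have h1 : ∑ x, (if g x = -m then -μ x else 0) < ∑ _x : E, (0:ℝ) := by
      apply Finset.sum_lt_sum (fun x _ => hle x)
      exact ⟨x0, Finset.mem_univ x0, by rw [if_pos hgx0]; linarith [hμpos x0]⟩
    simpa using h1
  have hge := ge_of_tendsto' hlim hak
  linarith
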